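/- For every profile there exists a woman-optimal stable matching, and every woman's partner in any stable matching lies weakly between her two extreme stable partners: for every stable matching μ and every woman w, w weakly prefers her woman-optimal partner to μ⁻¹ w, and weakly prefers μ⁻¹ w to her man-optimal partner. -/

import Mathlib

open Equiv

/-- A strict linear order over `Fin n`, encoded as the bijection sending each
position (position `0` = most preferred) to the element occupying that position. -/
abbrev Pref (n : ℕ) := Equiv.Perm (Fin n)

/-- `prefers r a b` : the order `r` strictly prefers `a` to `b`. -/
def prefers {n : ℕ} (r : Pref n) (a b : Fin n) : Prop := r.symm a < r.symm b

/-- `weaklyPrefers r a b` : the order `r` weakly prefers `a` to `b`. -/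
def weaklyPrefers {n : ℕ} (r : Pref n) (a b : Fin n) : Prop := r.symm a ≤ r.symm b

/-- A profile of the stable marriage problem with `n` men and `n` women:
each man has a strict linear order over the women and vice versa. -/
structure Profile (n : ℕ) where
  menPref : Fin n → Pref n
  womenPref : Fin n → Pref n

/-- A matching is a bijection from the men to the women. -/
abbrev Matching (n : ℕ) := Equiv.Perm (Fin n)

/-- `m` and `w` form a blocking pair for `μ`. -/
def IsBlockingPair {n : ℕ} (p : Profile n) (μ : Matching n) (m w : Fin n) : Prop :=
  μ m ≠ w ∧ prefers (p.menPref m) w (μ m) ∧ prefers (p.womenPref w) m (μ.symm w)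

/-- A matching is stable when it admits no blocking pair. -/
def IsStable {n : ℕ} (p : Profile n) (μ : Matching n) : Prop :=
  ∀ m w, ¬ IsBlockingPair p μ m w

/-- A stable matching in which every man is matched to his best stable partner. -/
def ManOptimal {n : ℕ} (p : Profile n) (μs : Matching n) : Prop :=
  IsStable p μs ∧ ∀ μ, IsStable p μ → ∀ m, weaklyPrefers (p.menPref m) (μs m) (μ m)

/-- A stable matching in which every woman is matched to her best stable partner. -/
def WomanOptimal {n : ℕ} (p : Profile n) (μs : Matching n) : Prop :=
  IsStable p μs ∧ ∀ μ, IsStable p μ → ∀ w, weaklyPrefers (p.womenPref w) (μs.symm w) (μ.symm w)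

/-- The gender-swapped profile. -/
def swapProfile {n : ℕ} (p : Profile n) : Profile n := ⟨p.womenPref, p.menPref⟩

/-- The rank list of a strict linear order: elements in decreasing order of preference. -/
def rankList {n : ℕ} (r : Pref n) : List (Fin n) := List.ofFn r

/-- The candidate signature vector of the family `L` after reindexing by `π`
and relabeling the alternatives by `ρ`. -/
def sigCandidate {n : ℕ} (L : Fin n → Pref n) (π ρ : Equiv.Perm (Fin n)) : List (Fin n) :=
  (List.ofFn (fun i => rankList ((L (π i)).trans ρ))).flatten

/-- The signature of a family of strict linear orders: the lexicographically least
concatenation of rank lists over all reindexings and relabelings. -/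
def signature {n : ℕ} (L : Fin n → Pref n) : List (Fin n) :=
  ((Finset.univ : Finset (Equiv.Perm (Fin n) × Equiv.Perm (Fin n))).image
      (fun q => sigCandidate L q.1 q.2)).min'
    (Finset.Nonempty.image ⟨(1, 1), Finset.mem_univ _⟩ _)

namespace SM
variable {n : ℕ}

/-- most preferred element of `s` according to `r`, `none` if `s` empty. -/
noncomputable def best (r : Pref n) (s : Finset (Fin n)) : Option (Fin n) :=
  if h : s.Nonempty then some (r ((s.image r.symm).min' (h.image _))) else none

lemma best_eq_none {r : Pref n} {s : Finset (Fin n)} (h : ¬ s.Nonempty) : best r s = none :=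
  dif_neg h

lemma best_spec {r : Pref n} {s : Finset (Fin n)} (h : s.Nonempty) :
    ∃ w, best r s = some w ∧ w ∈ s ∧ ∀ w' ∈ s, r.symm w ≤ r.symm w' := by
  refine ⟨_, dif_pos h, ?_, ?_⟩
  · have hm := (s.image r.symm).min'_mem (h.image _)
    simp only [Finset.mem_image] at hm
    obtain ⟨a, ha, hae⟩ := hm
    rw [← hae]; simpa using ha
  · intro w' hw'
    have := (s.image r.symm).min'_le (r.symm w') (Finset.mem_image_of_mem _ hw')
    simpa using this

lemma best_eq_some {r : Pref n} {s : Finset (Fin n)} {w : Fin n} (hw : w ∈ s)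
    (hmin : ∀ w' ∈ s, r.symm w ≤ r.symm w') : best r s = some w := by
  obtain ⟨w₀, h0, hm, hle⟩ := best_spec (⟨w, hw⟩ : s.Nonempty)
  have : r.symm w₀ = r.symm w := le_antisymm (hle w hw) (hmin w₀ hm)
  rw [h0, r.symm.injective this]

/-- rank value: bigger = better, `none` = 0 (worst). -/
def val (r : Pref n) : Option (Fin n) → ℕ
  | none => 0
  | some a => n - (r.symm a : ℕ)

lemma val_some (r : Pref n) (a : Fin n) : val r (some a) = n - (r.symm a : ℕ) := rfl

lemma val_some_le_some {r : Pref n} {a b : Fin n} :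
    val r (some a) ≤ val r (some b) ↔ (r.symm b : ℕ) ≤ (r.symm a : ℕ) := by
  have ha := (r.symm a).isLt; have hb := (r.symm b).isLt
  simp only [val_some]; omega

lemma val_pos (r : Pref n) (a : Fin n) : 0 < val r (some a) := by
  have := (r.symm a).isLt; simp only [val_some]; omega

lemma val_le_n (r : Pref n) (o : Option (Fin n)) : val r o ≤ n := by
  cases o with
  | none => exact Nat.zero_le n
  | some a => simp only [val_some]; omega

lemma val_inj {r : Pref n} {o o' : Option (Fin n)} (h : val r o = val r o') : o = o' := by
  cases o with
  | none => cases o' with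
    | none => rfl
    | some b => exact absurd h.symm (val_pos r b).ne'
  | some a => cases o' with
    | none => exact absurd h (val_pos r a).ne'
    | some b =>
      have ha := (r.symm a).isLt; have hb := (r.symm b).isLt
      simp only [val_some] at h
      have : (r.symm a : ℕ) = (r.symm b : ℕ) := by omega
      rw [r.symm.injective (Fin.ext this)]

lemma val_best_mono (r : Pref n) {s t : Finset (Fin n)} (hst : s ⊆ t) :
    val r (best r s) ≤ val r (best r t) := by
  by_cases hs : s.Nonempty
  · obtain ⟨w, hw, hws, _⟩ := best_spec hs
    obtain ⟨w', hw', hw't, hmin⟩ := best_spec (hs.mono hst)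
    rw [hw, hw', val_some_le_some]
    exact hmin w (hst hws)
  · rw [best_eq_none hs]; exact Nat.zero_le _

variable (p : Profile n)

/-- set of women who would accept man `m` given aspirations `y`. -/
noncomputable def Amen (y : Fin n → Option (Fin n)) (m : Fin n) : Finset (Fin n) :=
  Finset.univ.filter fun w => val (p.womenPref w) (y w) ≤ val (p.womenPref w) (some m)

noncomputable def Awom (x : Fin n → Option (Fin n)) (w : Fin n) : Finset (Fin n) :=
  Finset.univ.filter fun m => val (p.menPref m) (x m) ≤ val (p.menPref m) (some w)

abbrev State (n : ℕ) := (Fin n → Option (Fin n)) × (Fin n → Option (Fin n))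

noncomputable def T (a : State n) : State n :=
  (fun m => best (p.menPref m) (Amen p a.2 m),
   fun w => best (p.womenPref w) (Awom p a.1 w))

def sle (a b : State n) : Prop :=
  (∀ m, val (p.menPref m) (a.1 m) ≤ val (p.menPref m) (b.1 m)) ∧
  (∀ w, val (p.womenPref w) (b.2 w) ≤ val (p.womenPref w) (a.2 w))

lemma sle_refl (a : State n) : sle p a a := ⟨fun _ => le_rfl, fun _ => le_rfl⟩

lemma sle_trans {a b c : State n} (h1 : sle p a b) (h2 : sle p b c) : sle p a c :=
  ⟨fun m => (h1.1 m).trans (h2.1 m), fun w => (h2.2 w).trans (h1.2 w)⟩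

lemma sle_antisymm {a b : State n} (h1 : sle p a b) (h2 : sle p b a) : a = b := by
  refine Prod.ext (funext fun m => ?_) (funext fun w => ?_)
  · exact val_inj (le_antisymm (h1.1 m) (h2.1 m))
  · exact val_inj (le_antisymm (h2.2 w) (h1.2 w))

lemma T_mono {a b : State n} (h : sle p a b) : sle p (T p a) (T p b) := by
  constructor
  · intro m
    refine val_best_mono _ ?_
    intro w hw
    simp only [Amen, Finset.mem_filter, Finset.mem_univ, true_and] at hw ⊢
    exact (h.2 w).trans hw
  · intro w
    refine val_best_mono _ ?_
    intro m hm
    simp only [Awom, Finset.mem_filter, Finset.mem_univ, true_and] at hm ⊢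
    exact (h.1 m).trans hm

noncomputable def topS (hn : 1 ≤ n) : State n :=
  (fun m => some ((p.menPref m) ⟨0, hn⟩), fun _ => none)

lemma sle_top (hn : 1 ≤ n) (a : State n) : sle p a (topS p hn) := by
  constructor
  · intro m
    have : val (p.menPref m) (some ((p.menPref m) ⟨0, hn⟩)) = n := by
      simp [val_some]
    rw [topS, this]
    exact val_le_n _ _
  · intro w
    exact Nat.zero_le _

lemma exists_fixed (hn : 1 ≤ n) :
    ∃ z : State n, T p z = z ∧ ∀ a : State n, T p a = a → sle p a z := by
  set f : ℕ → State n := fun k => (T p)^[k] (topS p hn) with hf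
  have hstep : ∀ k, sle p (f (k + 1)) (f k) := by
    intro k
    induction k with
    | zero => exact sle_top p hn _
    | succ k ih =>
      have h := T_mono p ih
      rwa [← Function.iterate_succ_apply' (T p) (k + 1), ← Function.iterate_succ_apply' (T p) k] at h
  have hanti : ∀ {k l : ℕ}, k ≤ l → sle p (f l) (f k) := by
    intro k l hkl
    induction l with
    | zero => simp_all [Nat.le_zero.mp hkl, sle_refl]
    | succ l ih =>
      rcases Nat.lt_or_ge k (l + 1) with h | h
      · exact sle_trans p (hstep l) (ih (Nat.lt_succ_iff.mp h))
      · have : k = l + 1 := le_antisymm hkl h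
        subst this; exact sle_refl p _
  obtain ⟨k, l, hne, heq⟩ := Finite.exists_ne_map_eq_of_infinite f
  wlog hkl : k < l generalizing k l
  · exact this l k hne.symm heq.symm (by omega)
  refine ⟨f k, ?_, ?_⟩
  · have h1 : sle p (f l) (f (k + 1)) := hanti hkl
    have h2 : sle p (f (k + 1)) (f k) := hstep k
    have : T p (f k) = f (k + 1) := (Function.iterate_succ_apply' _ _ _).symm
    rw [this]
    exact sle_antisymm p (heq ▸ h1) h2 ▸ rfl
  · intro a ha
    have : ∀ j, sle p a (f j) := by
      intro j
      induction j with
      | zero => exact sle_top p hn a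
      | succ j ih =>
        have : f (j + 1) = T p (f j) := Function.iterate_succ_apply' _ _ _
        rw [this, ← ha]
        exact T_mono p ih
    exact this k

lemma best_some {r : Pref n} {s : Finset (Fin n)} {w : Fin n} (h : best r s = some w) :
    w ∈ s ∧ ∀ w' ∈ s, r.symm w ≤ r.symm w' := by
  by_cases hs : s.Nonempty
  · obtain ⟨w₀, h0, hm, hle⟩ := best_spec hs
    rw [h0] at h
    obtain rfl := Option.some_injective _ h.symm
    exact ⟨hm, hle⟩
  · rw [best_eq_none hs] at h; exact absurd h (by simp)

lemma mem_Amen {y : Fin n → Option (Fin n)} {m w : Fin n} :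
    w ∈ Amen p y m ↔ val (p.womenPref w) (y w) ≤ val (p.womenPref w) (some m) := by
  simp [Amen]

lemma mem_Awom {x : Fin n → Option (Fin n)} {m w : Fin n} :
    m ∈ Awom p x w ↔ val (p.menPref m) (x m) ≤ val (p.menPref m) (some w) := by
  simp [Awom]

variable {p}

lemma fp_x {z : State n} (hz : T p z = z) (m : Fin n) :
    z.1 m = best (p.menPref m) (Amen p z.2 m) := (congrFun (congrArg Prod.fst hz) m).symm

lemma fp_y {z : State n} (hz : T p z = z) (w : Fin n) :
    z.2 w = best (p.womenPref w) (Awom p z.1 w) := (congrFun (congrArg Prod.snd hz) w).symm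

lemma fp_xy {z : State n} (hz : T p z = z) {m w : Fin n} (h : z.1 m = some w) :
    z.2 w = some m := by
  have hb := best_some ((fp_x hz m).symm.trans h)
  have hwA : val (p.womenPref w) (z.2 w) ≤ val (p.womenPref w) (some m) :=
    (mem_Amen p).mp hb.1
  have hmS : m ∈ Awom p z.1 w := (mem_Awom p).mpr (by rw [h])
  obtain ⟨m', hm', hm'S, hmin⟩ := best_spec (⟨m, hmS⟩ : (Awom p z.1 w).Nonempty)
  have hy : z.2 w = some m' := (fp_y hz w).trans hm'
  have h1 : val (p.womenPref w) (some m') ≤ val (p.womenPref w) (some m) := hy ▸ hwA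
  have h2 : val (p.womenPref w) (some m) ≤ val (p.womenPref w) (some m') :=
    val_some_le_some.mpr (Fin.le_iff_val_le_val.mp (hmin m hmS))
  rw [hy, val_inj (le_antisymm h2 h1)]

lemma fp_yx {z : State n} (hz : T p z = z) {m w : Fin n} (h : z.2 w = some m) :
    z.1 m = some w := by
  have hb := best_some ((fp_y hz w).symm.trans h)
  have hwA : val (p.menPref m) (z.1 m) ≤ val (p.menPref m) (some w) :=
    (mem_Awom p).mp hb.1
  have hmS : w ∈ Amen p z.2 m := (mem_Amen p).mpr (by rw [h])
  obtain ⟨w', hw', hw'S, hmin⟩ := best_spec (⟨w, hmS⟩ : (Amen p z.2 m).Nonempty)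
  have hx : z.1 m = some w' := (fp_x hz m).trans hw'
  have h1 : val (p.menPref m) (some w') ≤ val (p.menPref m) (some w) := hx ▸ hwA
  have h2 : val (p.menPref m) (some w) ≤ val (p.menPref m) (some w') :=
    val_some_le_some.mpr (Fin.le_iff_val_le_val.mp (hmin w hmS))
  rw [hx, val_inj (le_antisymm h2 h1)]

lemma fp_total {z : State n} (hz : T p z = z) (m : Fin n) : (z.1 m).isSome := by
  by_contra h0
  have hx0 : z.1 m = none := Option.not_isSome_iff_eq_none.mp h0
  have hAempty : ¬ (Amen p z.2 m).Nonempty := by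
    intro hA
    obtain ⟨w, hw, _, _⟩ := best_spec hA
    rw [← fp_x hz m, hx0] at hw
    exact absurd hw (by simp)
  have hsome : ∀ w, (z.2 w).isSome := by
    intro w
    cases h2 : z.2 w with
    | some m' => rfl
    | none =>
      exfalso
      exact hAempty ⟨w, (mem_Amen p).mpr (by rw [h2]; exact Nat.zero_le _)⟩
  set g : Fin n → Fin n := fun w => (z.2 w).get (hsome w) with hg
  have hgv : ∀ w, z.2 w = some (g w) := fun w => (Option.some_get (hsome w)).symm
  have ginj : Function.Injective g := by
    intro w w' hww'
    have h1 := fp_yx hz (hgv w)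
    have h2 := fp_yx hz (hgv w')
    rw [hww'] at h1
    exact Option.some_injective _ (h1.symm.trans h2)
  obtain ⟨w, hw⟩ := (Finite.injective_iff_surjective.mp ginj) m
  have := fp_yx hz (m := m) (by rw [hgv w, hw])
  rw [hx0] at this
  exact absurd this (by simp)

lemma fp_matching {p : Profile n} {z : State n} (hz : T p z = z) :
    ∃ μ : Matching n, (∀ m, z.1 m = some (μ m)) ∧ (∀ w, z.2 w = some (μ.symm w)) := by
  set f : Fin n → Fin n := fun m => (z.1 m).get (fp_total hz m) with hf
  have hfv : ∀ m, z.1 m = some (f m) := fun m => (Option.some_get (fp_total hz m)).symm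
  have finj : Function.Injective f := by
    intro m m' hmm'
    have h1 := fp_xy hz (hfv m)
    have h2 := fp_xy hz (hfv m')
    rw [hmm'] at h1
    exact Option.some_injective _ (h1.symm.trans h2)
  refine ⟨Equiv.ofBijective f (Finite.injective_iff_bijective.mp finj), fun m => hfv m, ?_⟩
  intro w
  have hkey : z.1 ((Equiv.ofBijective f (Finite.injective_iff_bijective.mp finj)).symm w)
      = some w := by
    rw [hfv ((Equiv.ofBijective f (Finite.injective_iff_bijective.mp finj)).symm w)]
    exact congrArg some (Equiv.ofBijective_apply_symm_apply f _ w)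
  exact fp_xy hz hkey

lemma fp_stable {p : Profile n} {z : State n} (hz : T p z = z) {μ : Matching n}
    (h1 : ∀ m, z.1 m = some (μ m)) (h2 : ∀ w, z.2 w = some (μ.symm w)) :
    IsStable p μ := by
  rintro m w ⟨hne, hmw, hwm⟩
  have hwA : w ∈ Amen p z.2 m := by
    rw [mem_Amen, h2 w]
    exact val_some_le_some.mpr (Fin.le_iff_val_le_val.mp hwm.le)
  have hb := best_some ((fp_x hz m).symm.trans (h1 m))
  exact absurd (hb.2 w hwA) (not_le.mpr hmw)

lemma stable_fixed {p : Profile n} {μ : Matching n} (hμ : IsStable p μ) :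
    T p (fun m => some (μ m), fun w => some (μ.symm w)) =
      (fun m => some (μ m), fun w => some (μ.symm w)) := by
  refine Prod.ext (funext fun m => ?_) (funext fun w => ?_)
  · refine best_eq_some ?_ ?_
    · rw [mem_Amen]
      simp
    · intro w hw
      by_contra hlt
      have hlt : (p.menPref m).symm w < (p.menPref m).symm (μ m) := not_le.mp hlt
      have hne : μ m ≠ w := fun h => absurd (h ▸ rfl) hlt.ne'
      rw [mem_Amen] at hw
      have hle : (p.womenPref w).symm m ≤ (p.womenPref w).symm (μ.symm w) :=
        val_some_le_some.mp hw
      have hne2 : m ≠ μ.symm w := by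
        intro h
        exact hne (by rw [h, Equiv.apply_symm_apply])
      exact hμ m w ⟨hne, hlt, lt_of_le_of_ne hle (fun h =>
        hne2 ((p.womenPref w).symm.injective h))⟩
  · refine best_eq_some ?_ ?_
    · rw [mem_Awom]
      simp
    · intro m hm
      by_contra hlt
      have hlt : (p.womenPref w).symm m < (p.womenPref w).symm (μ.symm w) := not_le.mp hlt
      have hne2 : m ≠ μ.symm w := fun h => absurd (h ▸ rfl) hlt.ne'
      have hne : μ m ≠ w := by
        intro h
        exact hne2 (by rw [← h, Equiv.symm_apply_apply])
      rw [mem_Awom] at hm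
      have hle : (p.menPref m).symm w ≤ (p.menPref m).symm (μ m) :=
        val_some_le_some.mp hm
      exact hμ m w ⟨hne, lt_of_le_of_ne hle (fun h =>
        hne ((p.menPref m).symm.injective h).symm), hlt⟩

lemma exists_manOptimal (hn : 1 ≤ n) (p : Profile n) : ∃ μs : Matching n, ManOptimal p μs := by
  obtain ⟨z, hz, hmax⟩ := exists_fixed p hn
  obtain ⟨μs, h1, h2⟩ := fp_matching hz
  refine ⟨μs, fp_stable hz h1 h2, ?_⟩
  intro μ hμ m
  have hle := (hmax _ (stable_fixed hμ)).1 m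
  rw [h1 m] at hle
  exact Fin.le_iff_val_le_val.mpr (val_some_le_some.mp hle)

lemma isStable_swap {p : Profile n} {μ : Matching n} (h : IsStable p μ) :
    IsStable (swapProfile p) μ.symm := by
  rintro w m ⟨h1, h2, h3⟩
  refine h m w ⟨?_, ?_, h2⟩
  · intro hc
    exact h1 (by rw [← hc, Equiv.symm_apply_apply])
  · simpa [swapProfile] using h3

lemma swap_swap (p : Profile n) : swapProfile (swapProfile p) = p := rfl

lemma exists_womanOptimal (hn : 1 ≤ n) (p : Profile n) :
    ∃ μW : Matching n, WomanOptimal p μW := by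
  obtain ⟨μs, hs, hopt⟩ := exists_manOptimal hn (swapProfile p)
  refine ⟨μs.symm, ?_, ?_⟩
  · exact isStable_swap (p := swapProfile p) hs
  · intro μ hμ w
    have := hopt μ.symm (isStable_swap hμ) w
    simpa [weaklyPrefers, swapProfile] using this

lemma man_optimal_woman_pessimal {p : Profile n} {μM : Matching n} (hM : ManOptimal p μM)
    {μ : Matching n} (hμ : IsStable p μ) (w : Fin n) :
    weaklyPrefers (p.womenPref w) (μ.symm w) (μM.symm w) := by
  by_contra hcon
  have hlt : (p.womenPref w).symm (μM.symm w) < (p.womenPref w).symm (μ.symm w) :=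
    not_le.mp hcon
  set m := μM.symm w with hm
  have hMm : μM m = w := Equiv.apply_symm_apply _ _
  have hne2 : m ≠ μ.symm w := fun h => absurd (h ▸ rfl) hlt.ne
  have hne : μ m ≠ w := by
    intro h
    exact hne2 (by rw [← h, Equiv.symm_apply_apply])
  have hopt := hM.2 μ hμ m
  rw [hMm] at hopt
  have hstrict : (p.menPref m).symm w < (p.menPref m).symm (μ m) :=
    lt_of_le_of_ne hopt (fun h => hne ((p.menPref m).symm.injective h).symm)
  exact hμ m w ⟨hne, hstrict, hlt⟩

end SM


/-- There exists a woman-optimal stable matching, and in every stable matching every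
woman's partner lies weakly between her woman-optimal and her man-optimal partner. -/
theorem woman_optimal_exists_and_partners_between (n : ℕ) (hn : 1 ≤ n) (p : Profile n) :
    ∃ μW : Matching n, WomanOptimal p μW ∧
      ∀ μM : Matching n, ManOptimal p μM →
        ∀ μ : Matching n, IsStable p μ → ∀ w : Fin n,
          weaklyPrefers (p.womenPref w) (μW.symm w) (μ.symm w) ∧
          weaklyPrefers (p.womenPref w) (μ.symm w) (μM.symm w) := by
  obtain ⟨μW, hW⟩ := SM.exists_womanOptimal hn p
  exact ⟨μW, hW, fun μM hM μ hμ w =>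
    ⟨hW.2 μ hμ w, SM.man_optimal_woman_pessimal hM hμ w⟩⟩
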